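/- arXiv:1106.0857 — 2 statements merged into one kernel-verified Lean document; each statement's English description precedes it below -/
import Mathlib

section
/- Let h be complex-analytic on a neighborhood of 0 ∈ ℂ with h(0) = 0, and suppose that 0 is NOT an isolated point of C(h) = {z : h(z) = conj(z)}. Then |h′(0)| = 1, say h′(0) = exp(iθ) with θ ∈ ℝ, and there exist a neighborhood V of 0, an ε > 0, and an injective real-analytic map γ : (−ε, ε) → ℂ with γ(0) = 0 and γ′(0) a nonzero real multiple of exp(−iθ/2), such that C(h) ∩ V = γ((−ε, ε)) ∩ V. In other words, near the origin C(h) is a real-analytic curve, smooth at the origin and tangent there to the line {s·exp(−iθ/2) : s ∈ ℝ}. -/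
open Complex Filter Metric Set
open scoped Topology

private lemma hasDerivAt_conj_conj {f : ℂ → ℂ} {a z : ℂ}
    (hf : HasDerivAt f a ((starRingEnd ℂ) z)) :
    HasDerivAt (fun w => (starRingEnd ℂ) (f ((starRingEnd ℂ) w))) ((starRingEnd ℂ) a) z := by
  rw [hasDerivAt_iff_tendsto_slope] at hf ⊢
  have h1 : Tendsto (starRingEnd ℂ) (𝓝[≠] z) (𝓝[≠] ((starRingEnd ℂ) z)) := by
    rw [tendsto_nhdsWithin_iff]
    constructor
    · exact (Complex.continuous_conj.tendsto z).mono_left nhdsWithin_le_nhds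
    · filter_upwards [self_mem_nhdsWithin] with w hw
      simp only [Set.mem_compl_iff, Set.mem_singleton_iff] at hw ⊢
      intro hc
      exact hw (by simpa using congrArg (starRingEnd ℂ) hc)
  have h2 := (Complex.continuous_conj.tendsto a).comp (hf.comp h1)
  refine h2.congr fun w => ?_
  simp only [Function.comp_apply, slope_def_field]
  rw [map_div₀, map_sub, map_sub, Complex.conj_conj, Complex.conj_conj]



open Complex

/-- If `h` is analytic near `0`, `h 0 = 0`, and `0` is not an isolated point of
`C(h) = {z : h z = conj z}`, then `h'(0) = exp(iθ)` for some real `θ`, and near the origin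
`C(h)` is a real-analytic curve, smooth at the origin and tangent there to the line
`{s·exp(-iθ/2) : s ∈ ℝ}`. -/
theorem conjugacy_locus_is_smooth_analytic_curve (h : ℂ → ℂ)
    (hh : AnalyticAt ℂ h 0) (h0 : h 0 = 0)
    (hcl : ∀ δ : ℝ, 0 < δ → ∃ z : ℂ, z ≠ 0 ∧ ‖z‖ < δ ∧ h z = (starRingEnd ℂ) z) :
    ∃ θ : ℝ, deriv h 0 = Complex.exp (θ * Complex.I) ∧
      ∃ V ∈ nhds (0 : ℂ), ∃ ε : ℝ, 0 < ε ∧ ∃ γ : ℝ → ℂ,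
        AnalyticOnNhd ℝ γ (Set.Ioo (-ε) ε) ∧
        Set.InjOn γ (Set.Ioo (-ε) ε) ∧
        γ 0 = 0 ∧
        (∃ c : ℝ, c ≠ 0 ∧ deriv γ 0 = (c : ℂ) * Complex.exp (-(θ / 2 : ℝ) * Complex.I)) ∧
        {z : ℂ | h z = (starRingEnd ℂ) z} ∩ V = γ '' (Set.Ioo (-ε) ε) ∩ V := by
  classical
  have hdiff : ∀ᶠ z in 𝓝 (0 : ℂ), DifferentiableAt ℂ h z :=
    analyticAt_iff_eventually_differentiableAt.mp hh
  set hb : ℂ → ℂ := fun z => (starRingEnd ℂ) (h ((starRingEnd ℂ) z)) with hbdef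
  have hbder : ∀ {z : ℂ}, DifferentiableAt ℂ h ((starRingEnd ℂ) z) →
      HasDerivAt hb ((starRingEnd ℂ) (deriv h ((starRingEnd ℂ) z))) z :=
    fun hz => hasDerivAt_conj_conj hz.hasDerivAt
  have hconj_tendsto : Tendsto (starRingEnd ℂ) (𝓝 (0 : ℂ)) (𝓝 (0 : ℂ)) := by
    simpa using Complex.continuous_conj.tendsto (0 : ℂ)
  have hbdiff : ∀ᶠ z in 𝓝 (0 : ℂ), DifferentiableAt ℂ hb z := by
    filter_upwards [hconj_tendsto.eventually hdiff] with z hz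
    exact (hbder hz).differentiableAt
  have hb_an : AnalyticAt ℂ hb 0 := analyticAt_iff_eventually_differentiableAt.mpr hbdiff
  have hbderiv0 : HasDerivAt hb ((starRingEnd ℂ) (deriv h 0)) 0 := by
    have := hbder (z := 0) (by simpa using hh.differentiableAt)
    simpa using this
  -- identity theorem: hb ∘ h = id near 0
  have hcomp_an : AnalyticAt ℂ (fun z => hb (h z)) 0 := by
    have h1 : AnalyticAt ℂ hb (h 0) := by rwa [h0]
    exact h1.comp hh
  have hfreq : ∃ᶠ z in 𝓝[≠] (0 : ℂ), hb (h z) = z := by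
    rw [Filter.frequently_iff]
    intro U hU
    rcases Metric.mem_nhdsWithin_iff.mp hU with ⟨δ, hδ, hsub⟩
    rcases hcl δ hδ with ⟨z, hz0, hzδ, hz⟩
    refine ⟨z, hsub ⟨?_, hz0⟩, ?_⟩
    · simpa [Metric.mem_ball, Complex.dist_eq] using hzδ
    · rw [hz]
      show (starRingEnd ℂ) (h ((starRingEnd ℂ) ((starRingEnd ℂ) z))) = z
      rw [Complex.conj_conj, hz, Complex.conj_conj]
  have heq : ∀ᶠ z in 𝓝 (0 : ℂ), hb (h z) = z := by
    have := (hcomp_an.frequently_eq_iff_eventually_eq (analyticAt_id)).mp hfreq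
    filter_upwards [this] with z hz using hz
  -- |h'(0)| = 1
  have hchain : HasDerivAt (fun z => hb (h z)) ((starRingEnd ℂ) (deriv h 0) * deriv h 0) 0 := by
    have h1 : HasDerivAt hb ((starRingEnd ℂ) (deriv h 0)) (h 0) := by rw [h0]; exact hbderiv0
    exact h1.comp 0 hh.differentiableAt.hasDerivAt
  have hid : HasDerivAt (fun z => hb (h z)) 1 0 :=
    (hasDerivAt_id (0 : ℂ)).congr_of_eventuallyEq (heq.mono fun z hz => hz)
  have hmod : (starRingEnd ℂ) (deriv h 0) * deriv h 0 = 1 := hchain.unique hid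
  have habs : ‖deriv h 0‖ = 1 := by
    have h1 : ((Complex.normSq (deriv h 0) : ℝ) : ℂ) = 1 := by
      rw [← Complex.mul_conj, mul_comm]; exact hmod
    have h2 : Complex.normSq (deriv h 0) = 1 := by exact_mod_cast h1
    rw [Complex.norm_def, h2, Real.sqrt_one]
  set θ : ℝ := Complex.arg (deriv h 0) with hθdef
  have haexp : deriv h 0 = Complex.exp ((θ : ℂ) * Complex.I) := by
    conv_lhs => rw [← Complex.norm_mul_exp_arg_mul_I (deriv h 0)]
    rw [habs]
    simp [hθdef]
  set e : ℂ := Complex.exp (-(θ / 2 : ℝ) * Complex.I) with hedef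
  have he_ne : e ≠ 0 := Complex.exp_ne_zero _
  have habse : ‖e‖ = 1 := by
    rw [hedef, Complex.norm_exp]
    norm_num
  have hee : e * (starRingEnd ℂ) e = 1 := by
    rw [hedef, ← Complex.exp_conj, ← Complex.exp_add, ← Complex.exp_zero]
    congr 1
    simp only [map_mul, map_neg, Complex.conj_I, Complex.conj_ofReal]
    ring
  have hce : (starRingEnd ℂ) e * e = 1 := by rw [mul_comm]; exact hee
  have hea : e * (deriv h 0 * e) = 1 := by
    rw [haexp, hedef, ← Complex.exp_add, ← Complex.exp_add, ← Complex.exp_zero]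
    congr 1
    push_cast
    ring
  -- rotated function g and its conjugate partner gb
  set g : ℂ → ℂ := fun w => e * h (e * w) with hgdef
  set gb : ℂ → ℂ := fun w => (starRingEnd ℂ) (g ((starRingEnd ℂ) w)) with hgbdef
  have hg0 : g 0 = 0 := by simp [hgdef, h0]
  have hgb_eq : ∀ w, gb w = (starRingEnd ℂ) e * hb ((starRingEnd ℂ) e * w) := by
    intro w
    simp only [hgbdef, hgdef, hbdef, map_mul, Complex.conj_conj]
  have hmul_tendsto : Tendsto (fun w : ℂ => e * w) (𝓝 0) (𝓝 0) := by
    have h1 : Continuous (fun w : ℂ => e * w) := continuous_const.mul continuous_id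
    have := h1.tendsto (0 : ℂ)
    simpa using this
  have hgbg : ∀ᶠ w in 𝓝 (0 : ℂ), gb (g w) = w := by
    filter_upwards [hmul_tendsto.eventually heq] with w hw
    calc gb (g w) = (starRingEnd ℂ) e * hb ((starRingEnd ℂ) e * (e * h (e * w))) := by
            rw [hgb_eq]
      _ = (starRingEnd ℂ) e * hb (h (e * w)) := by rw [← mul_assoc, hce, one_mul]
      _ = (starRingEnd ℂ) e * (e * w) := by rw [hw]
      _ = w := by rw [← mul_assoc, hce, one_mul]
  have hgdiff : ∀ᶠ w in 𝓝 (0 : ℂ), DifferentiableAt ℂ g w := by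
    filter_upwards [hmul_tendsto.eventually hdiff] with w hw
    exact (hw.comp w (differentiableAt_id.const_mul e)).const_mul e
  have hgd : HasDerivAt g 1 0 := by
    have h1 : HasDerivAt (fun w : ℂ => e * w) (e * 1) 0 := (hasDerivAt_id (0 : ℂ)).const_mul e
    have h2 : HasDerivAt h (deriv h 0) (e * (0 : ℂ)) := by
      rw [mul_zero]; exact hh.differentiableAt.hasDerivAt
    have h3 := h2.comp (0 : ℂ) h1
    have h4 := h3.const_mul e
    have h5 : e * (deriv h 0 * (e * 1)) = 1 := by rw [mul_one]; exact hea
    rw [h5] at h4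
    exact h4
  -- the conjugating map φ
  set φ : ℂ → ℂ := fun w => (w + g w) / 2 with hφdef
  have hφ0 : φ 0 = 0 := by simp [hφdef, hg0]
  have hφd : HasDerivAt φ 1 0 := by
    have := ((hasDerivAt_id (0 : ℂ)).add hgd).div_const 2
    norm_num at this
    exact this
  have hφdiff : ∀ᶠ w in 𝓝 (0 : ℂ), DifferentiableAt ℂ φ w := by
    filter_upwards [hgdiff] with w hw
    exact (differentiableAt_id.add hw).div_const 2
  obtain ⟨r3, hr3, hφd3⟩ := Metric.eventually_nhds_iff_ball.mp hφdiff
  have hφ_an_ball : AnalyticOnNhd ℂ φ (ball (0 : ℂ) r3) :=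
    DifferentiableOn.analyticOnNhd (fun w hw => (hφd3 w hw).differentiableWithinAt) isOpen_ball
  have hφ_an0 : AnalyticAt ℂ φ 0 := hφ_an_ball 0 (mem_ball_self hr3)
  have hderiv_ne : ∀ᶠ w in 𝓝 (0 : ℂ), deriv φ w ≠ 0 := by
    have hcont : ContinuousAt (deriv φ) 0 :=
      ((hφ_an_ball.deriv) 0 (mem_ball_self hr3)).continuousAt
    have h1 : deriv φ 0 = 1 := hφd.deriv
    exact hcont.eventually_ne (by rw [h1]; exact one_ne_zero)
  -- local inverse ψ of φ
  have hφstrict : HasStrictDerivAt φ 1 0 :=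
    (hφ_an0.contDiffAt (n := 1)).hasStrictDerivAt' hφd one_ne_zero
  set E := hφstrict.hasStrictFDerivAt_equiv one_ne_zero with hEdef
  set P := E.toOpenPartialHomeomorph φ with hPdef
  set ψ : ℂ → ℂ := ⇑P.symm with hψdef
  have hP_coe : ⇑P = φ := E.toOpenPartialHomeomorph_coe
  have hsource : (0 : ℂ) ∈ P.source := E.mem_toOpenPartialHomeomorph_source
  have htarget0 : (0 : ℂ) ∈ P.target := by
    have := P.map_source hsource
    rwa [show P 0 = 0 by rw [hP_coe]; exact hφ0] at this
  have hleft : ∀ᶠ w in 𝓝 (0 : ℂ), ψ (φ w) = w := by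
    have := P.eventually_left_inverse hsource
    simp only [hP_coe] at this
    exact this
  have hright : ∀ᶠ y in 𝓝 (0 : ℂ), φ (ψ y) = y := by
    have := P.eventually_right_inverse' hsource
    simp only [hP_coe] at this
    rwa [hφ0] at this
  have hψ0 : ψ 0 = 0 := by
    have := hleft.self_of_nhds
    rwa [hφ0] at this
  have hψcont : Tendsto ψ (𝓝 0) (𝓝 0) := by
    have h1 := P.continuousAt_symm htarget0
    have h2 : ContinuousAt ψ 0 := h1
    rwa [ContinuousAt, hψ0] at h2
  -- radius ρ1 : all basic facts
  have hbig : ∀ᶠ w in 𝓝 (0 : ℂ),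
      DifferentiableAt ℂ φ w ∧ deriv φ w ≠ 0 ∧ gb (g w) = w ∧ ψ (φ w) = w := by
    filter_upwards [hφdiff, hderiv_ne, hgbg, hleft] with w h1 h2 h3 h4
    exact ⟨h1, h2, h3, h4⟩
  obtain ⟨ρ1, hρ1, hB1⟩ := Metric.eventually_nhds_iff_ball.mp hbig
  -- radius ρ2 : g maps into ball ρ1
  have hgtend : Tendsto g (𝓝 0) (𝓝 0) := by
    have := (hgdiff.self_of_nhds).continuousAt
    rwa [ContinuousAt, hg0] at this
  obtain ⟨ρ', hρ', hB'⟩ := Metric.eventually_nhds_iff_ball.mp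
    (hgtend.eventually_mem (ball_mem_nhds (0 : ℂ) hρ1))
  set ρ2 : ℝ := min ρ1 ρ' with hρ2def
  have hρ2 : 0 < ρ2 := lt_min hρ1 hρ'
  have hB2 : ∀ w ∈ ball (0 : ℂ) ρ2, w ∈ ball (0 : ℂ) ρ1 ∧ g w ∈ ball (0 : ℂ) ρ1 := fun w hw =>
    ⟨ball_subset_ball (min_le_left _ _) hw, hB' w (ball_subset_ball (min_le_right _ _) hw)⟩
  -- radius ε
  have hεev : ∀ᶠ y in 𝓝 (0 : ℂ),
      y ∈ P.target ∧ φ (ψ y) = y ∧ ψ y ∈ ball (0 : ℂ) ρ2 := by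
    filter_upwards [P.open_target.eventually_mem htarget0, hright,
      hψcont.eventually_mem (ball_mem_nhds (0 : ℂ) hρ2)] with y a b c
    exact ⟨a, b, c⟩
  obtain ⟨ε', hε', hBε'⟩ := Metric.eventually_nhds_iff_ball.mp hεev
  set ε : ℝ := min ε' ρ2 with hεdef
  have hε : 0 < ε := lt_min hε' hρ2
  have hBε : ∀ y ∈ ball (0 : ℂ) ε,
      y ∈ P.target ∧ φ (ψ y) = y ∧ ψ y ∈ ball (0 : ℂ) ρ2 := fun y hy =>
    hBε' y (ball_subset_ball (min_le_left _ _) hy)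
  have hερ2 : ball (0 : ℂ) ε ⊆ ball (0 : ℂ) ρ2 := ball_subset_ball (min_le_right _ _)
  have hmem_ball : ∀ t : ℝ, t ∈ Ioo (-ε) ε → ((t : ℂ) ∈ ball (0 : ℂ) ε) := by
    intro t ht
    rw [mem_ball_zero_iff, Complex.norm_real, Real.norm_eq_abs]
    exact abs_lt.mpr ⟨ht.1, ht.2⟩
  -- ψ is analytic on ball ε
  have hψan : AnalyticOnNhd ℂ ψ (ball (0 : ℂ) ε) := by
    apply DifferentiableOn.analyticOnNhd _ isOpen_ball
    intro y hy
    obtain ⟨hyT, hyr, hyψ⟩ := hBε y hy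
    have hw1 : ψ y ∈ ball (0 : ℂ) ρ1 := (hB2 _ hyψ).1
    obtain ⟨hd, hne, -, -⟩ := hB1 _ hw1
    have hsym : HasDerivAt ψ (deriv φ (ψ y))⁻¹ y := by
      apply P.hasDerivAt_symm hyT hne
      show HasDerivAt (⇑P) (deriv φ (P.symm y)) (P.symm y)
      rw [hP_coe]
      exact hd.hasDerivAt
    exact hsym.differentiableAt.differentiableWithinAt
  -- the curve
  refine ⟨θ, haexp, ball (0 : ℂ) ε, ball_mem_nhds _ hε, ε, hε,
    (fun t : ℝ => e * ψ ((t : ℂ))), ?_, ?_, ?_, ?_, ?_⟩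
  · -- analyticity
    intro t ht
    have h1 : AnalyticAt ℂ (fun z => e * ψ z) ((t : ℂ)) :=
      analyticAt_const.mul (hψan _ (hmem_ball t ht))
    have h2 : AnalyticAt ℝ (fun z => e * ψ z) ((t : ℂ)) := h1.restrictScalars
    have h3 : AnalyticAt ℝ (fun s : ℝ => ((s : ℂ))) t := Complex.ofRealCLM.analyticAt t
    exact h2.comp h3
  · -- injectivity
    intro s hs t ht hst
    have h1 : ψ ((s : ℂ)) = ψ ((t : ℂ)) := mul_left_cancel₀ he_ne hst
    have h2 := (hBε _ (hmem_ball s hs)).2.1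
    have h3 := (hBε _ (hmem_ball t ht)).2.1
    have : (s : ℂ) = (t : ℂ) := by rw [← h2, ← h3, h1]
    exact_mod_cast this
  · -- γ 0 = 0
    simp [hψ0]
  · -- derivative at 0
    refine ⟨1, one_ne_zero, ?_⟩
    have harg : HasDerivAt (⇑P) (1 : ℂ) (P.symm 0) := by
      have hs0 : P.symm (0 : ℂ) = 0 := hψ0
      rw [hs0, hP_coe]
      exact hφd
    have hψd0 : HasDerivAt ψ (1 : ℂ) 0 := by
      have := P.hasDerivAt_symm htarget0 one_ne_zero harg
      simpa using this
    have h1 : HasDerivAt (fun z => e * ψ z) (e * 1) (((0 : ℝ) : ℂ)) := by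
      rw [Complex.ofReal_zero]; exact hψd0.const_mul e
    have h2 : HasDerivAt (fun t : ℝ => e * ψ ((t : ℂ))) (e * 1) (0 : ℝ) := h1.comp_ofReal
    rw [h2.deriv]
    simp [hedef]
  · -- set equality
    ext z
    simp only [mem_inter_iff, mem_setOf_eq, mem_image]
    constructor
    · rintro ⟨hz, hzV⟩
      set w : ℂ := (starRingEnd ℂ) e * z with hwdef
      have hwz : e * w = z := by rw [hwdef, ← mul_assoc, hee, one_mul]
      have hwball : w ∈ ball (0 : ℂ) ε := by
        rw [mem_ball_zero_iff] at hzV ⊢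
        rw [hwdef, norm_mul]
        simp only [Complex.norm_conj, habse, one_mul]
        exact hzV
      have hwρ1 : w ∈ ball (0 : ℂ) ρ1 := (hB2 _ (hερ2 hwball)).1
      have hgw : g w = (starRingEnd ℂ) w := by
        show e * h (e * w) = _
        rw [hwz, hz, hwdef, map_mul, Complex.conj_conj]
      have hφw : φ w = ((w.re : ℝ) : ℂ) := by
        show (w + g w) / 2 = _
        rw [hgw, Complex.add_conj]
        push_cast
        ring
      have htI : w.re ∈ Ioo (-ε) ε := by
        have h1 : |w.re| < ε := by
          have h2 : ‖w‖ < ε := by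
            rw [mem_ball_zero_iff] at hwball; exact hwball
          exact lt_of_le_of_lt (Complex.abs_re_le_norm w) h2
        exact abs_lt.mp h1
      refine ⟨⟨w.re, htI, ?_⟩, hzV⟩
      show e * ψ ((w.re : ℂ)) = z
      rw [← hφw, (hB1 w hwρ1).2.2.2, hwz]
    · rintro ⟨⟨t, htI, hγt⟩, hzV⟩
      refine ⟨?_, hzV⟩
      obtain ⟨-, hφψ, hψρ2⟩ := hBε _ (hmem_ball t htI)
      set w : ℂ := ψ ((t : ℂ)) with hwdef
      have hwρ1 : w ∈ ball (0 : ℂ) ρ1 := (hB2 _ hψρ2).1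
      have hgwρ1 : g w ∈ ball (0 : ℂ) ρ1 := (hB2 _ hψρ2).2
      have hσρ1 : (starRingEnd ℂ) (g w) ∈ ball (0 : ℂ) ρ1 := by
        rw [mem_ball_zero_iff] at hgwρ1 ⊢
        simpa [Complex.norm_conj] using hgwρ1
      have hgbgw : gb (g w) = w := (hB1 _ hwρ1).2.2.1
      have hgσ : g ((starRingEnd ℂ) (g w)) = (starRingEnd ℂ) w := by
        have h1 : (starRingEnd ℂ) (gb (g w)) = g ((starRingEnd ℂ) (g w)) := by
          rw [hgbdef]
          simp only [Complex.conj_conj]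
        rw [← h1, hgbgw]
      have hφσ : φ ((starRingEnd ℂ) (g w)) = ((t : ℂ)) := by
        show ((starRingEnd ℂ) (g w) + g ((starRingEnd ℂ) (g w))) / 2 = _
        rw [hgσ]
        have h1 : ((starRingEnd ℂ) (g w) + (starRingEnd ℂ) w) / 2
            = (starRingEnd ℂ) ((w + g w) / 2) := by
          rw [map_div₀, map_add, map_ofNat]
          ring
        rw [h1]
        have h2 : (w + g w) / 2 = φ w := rfl
        rw [h2, hφψ, Complex.conj_ofReal]
      have hσw : (starRingEnd ℂ) (g w) = w := by
        have h1 := (hB1 _ hσρ1).2.2.2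
        rw [hφσ] at h1
        exact h1.symm.trans hwdef.symm
      have hgw : g w = (starRingEnd ℂ) w := by
        have := congrArg (starRingEnd ℂ) hσw
        rwa [Complex.conj_conj] at this
      have hz : h (e * w) = (starRingEnd ℂ) (e * w) := by
        have h2 : e * h (e * w) = e * (starRingEnd ℂ) (e * w) := by
          have h3 : e * h (e * w) = g w := rfl
          rw [h3, hgw, map_mul, ← mul_assoc, hee, one_mul]
        exact mul_left_cancel₀ he_ne h2
      rw [← hγt]
      exact hz
end

section
/- Let a < b be reals and let φ : [a, b] → ℂ be continuous with φ(t) ≠ 0 for all t ∈ [a, b]. Let θ : [a, b] → ℝ be any continuous argument of φ. If the set {t ∈ [a, b] : Im φ(t) = 0} is finite with N elements, then |θ(b) − θ(a)| ≤ (N + 1)·π. -/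
open Complex Real

/-- If `φ : [a, b] → ℂ` is continuous and nonvanishing, `θ` is a continuous argument of `φ`,
and the imaginary part of `φ` vanishes at exactly `N` points of `[a, b]`, then the variation
of the argument satisfies `|θ(b) - θ(a)| ≤ (N + 1)·π`. -/
theorem variation_of_argument_bounded_by_zeros_of_imaginary_part
    (a b : ℝ) (hab : a < b) (φ : ℝ → ℂ)
    (hφ : ContinuousOn φ (Set.Icc a b))
    (hne : ∀ t ∈ Set.Icc a b, φ t ≠ 0)
    (θ : ℝ → ℝ) (hθ : ContinuousOn θ (Set.Icc a b))
    (harg : ∀ t ∈ Set.Icc a b, φ t = (‖φ t‖ : ℂ) * Complex.exp ((θ t : ℂ) * Complex.I))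
    (N : ℕ) (hfin : {t ∈ Set.Icc a b | (φ t).im = 0}.Finite)
    (hcard : {t ∈ Set.Icc a b | (φ t).im = 0}.ncard = N) :
    |θ b - θ a| ≤ (N + 1) * π := by
  by_contra hcon
  push_neg at hcon
  set S := {t ∈ Set.Icc a b | (φ t).im = 0} with hS
  have hπ := Real.pi_pos
  set c := min (θ a) (θ b) with hc
  set d := max (θ a) (θ b) with hd
  have hdc : d - c = |θ b - θ a| := by
    rw [hc, hd, max_sub_min_eq_abs, abs_sub_comm]
  have hsub : Set.Icc c d ⊆ θ '' Set.Icc a b := by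
    have h := intermediate_value_uIcc
      (by rwa [Set.uIcc_of_le hab.le] : ContinuousOn θ (Set.uIcc a b))
    rwa [Set.uIcc_of_le hab.le] at h
  set m : ℤ := ⌊c / π⌋ with hm
  have hmπ : (m : ℝ) * π ≤ c := by
    have h0 : (m : ℝ) ≤ c / π := Int.floor_le _
    rw [le_div_iff₀ hπ] at h0
    exact h0
  have hmπ' : c < ((m : ℝ) + 1) * π := by
    have h1 : c / π < (m : ℝ) + 1 := Int.lt_floor_add_one _
    rw [div_lt_iff₀ hπ] at h1
    linarith
  have hmem : ∀ j : Fin (N + 1), ((m + 1 + (j : ℤ)) : ℝ) * π ∈ Set.Icc c d := by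
    intro j
    have hj0 : (0 : ℝ) ≤ ((j : ℕ) : ℝ) := Nat.cast_nonneg _
    have hjN : ((j : ℕ) : ℝ) ≤ (N : ℝ) := by exact_mod_cast Nat.lt_succ_iff.mp j.isLt
    have hcast : ((m + 1 + (j : ℤ)) : ℝ) = (m : ℝ) + 1 + ((j : ℕ) : ℝ) := by push_cast; ring
    rw [hcast]
    have hvar : ((N : ℝ) + 1) * π < d - c := by rw [hdc]; exact hcon
    constructor
    · nlinarith
    · nlinarith
  have hT : ∀ j : Fin (N + 1), ∃ t ∈ Set.Icc a b, θ t = ((m + 1 + (j : ℤ)) : ℝ) * π := by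
    intro j
    obtain ⟨t, ht, hθt⟩ := hsub (hmem j)
    exact ⟨t, ht, hθt⟩
  choose t ht hθt using hT
  have htS : ∀ j, t j ∈ S := by
    intro j
    refine ⟨ht j, ?_⟩
    have him : (φ (t j)).im = ‖φ (t j)‖ * Real.sin (θ (t j)) := by
      rw [harg _ (ht j)]
      simp [Complex.mul_im, Complex.exp_ofReal_mul_I_im]
    have hcast : (m : ℝ) + 1 + ((j : ℕ) : ℝ) = ((m + 1 + (j : ℤ) : ℤ) : ℝ) := by
      push_cast; ring
    rw [him, hθt j]
    push_cast
    rw [hcast, Real.sin_int_mul_pi, mul_zero]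
  have hinj : Function.Injective t := by
    intro i j hij
    have h1 : ((m + 1 + (i : ℤ)) : ℝ) * π = ((m + 1 + (j : ℤ)) : ℝ) * π := by
      rw [← hθt i, ← hθt j, hij]
    have h2 : ((m + 1 + (i : ℤ)) : ℝ) = ((m + 1 + (j : ℤ)) : ℝ) :=
      mul_right_cancel₀ hπ.ne' h1
    have h3 : m + 1 + ((i : ℕ) : ℤ) = m + 1 + ((j : ℕ) : ℤ) := by exact_mod_cast h2
    have h4 : ((i : ℕ) : ℤ) = ((j : ℕ) : ℤ) := by omega
    exact Fin.ext (by exact_mod_cast h4)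
  have hrange : Set.range t ⊆ S := Set.range_subset_iff.mpr htS
  have h1 : (Set.range t).ncard = N + 1 := by
    rw [← Set.image_univ, Set.ncard_image_of_injective _ hinj, Set.ncard_univ]
    simp
  have h2 : (Set.range t).ncard ≤ S.ncard := Set.ncard_le_ncard hrange hfin
  rw [h1, hcard] at h2
  omega
end
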